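/- arXiv:2312.15474 — 2 statements merged into one kernel-verified Lean document; each statement's English description precedes it below -/
import Mathlib

section
/- For any policy π and transition kernels P_s, P_t with rewards bounded by R_max, if ν^π_{P_s} is absolutely continuous with respect to ν^π_{P_t}, then J^π_{P_t} ≥ J^π_{P_s} − (√2 · R_max/(1−γ)) · √(D_KL(ν^π_{P_s} ‖ ν^π_{P_t})). -/
open scoped BigOperators

section MDP

variable {S A : Type*} [Fintype S] [Fintype A] [DecidableEq S]

/-- One-step state distribution update under kernel `P` and policy `π`. -/
noncomputable def stepDist (P : S → A → S → ℝ) (π : S → A → ℝ) (ρ : S → ℝ) : S → ℝ :=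
  fun s => ∑ s' : S, ∑ a : A, ρ s' * π s' a * P s' a s

/-- Distribution of the state at time `t`. -/
noncomputable def stateDist (P : S → A → S → ℝ) (π : S → A → ℝ) (ρ₀ : S → ℝ) : ℕ → S → ℝ
  | 0 => ρ₀
  | t + 1 => stepDist P π (stateDist P π ρ₀ t)

/-- Discounted state visitation distribution `d^π_P`. -/
noncomputable def visitS (γ : ℝ) (P : S → A → S → ℝ) (π : S → A → ℝ) (ρ₀ : S → ℝ) : S → ℝ :=
  fun s => (1 - γ) * ∑' t : ℕ, γ ^ t * stateDist P π ρ₀ t s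

/-- Discounted state-action visitation distribution `μ^π_P`. -/
noncomputable def visitSA (γ : ℝ) (P : S → A → S → ℝ) (π : S → A → ℝ) (ρ₀ : S → ℝ) :
    S × A → ℝ :=
  fun x => (1 - γ) * ∑' t : ℕ, γ ^ t * stateDist P π ρ₀ t x.1 * π x.1 x.2

/-- Discounted transition (state-action-next-state) visitation distribution `ν^π_P`. -/
noncomputable def visitT (γ : ℝ) (P : S → A → S → ℝ) (π : S → A → ℝ) (ρ₀ : S → ℝ) :
    S × A × S → ℝ :=
  fun x => (1 - γ) * ∑' t : ℕ, γ ^ t * stateDist P π ρ₀ t x.1 * π x.1 x.2.1 * P x.1 x.2.1 x.2.2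

/-- Expected discounted return starting from initial distribution `ρ₀`. -/
noncomputable def ret (γ : ℝ) (r : S → A → S → ℝ) (P : S → A → S → ℝ) (π : S → A → ℝ)
    (ρ₀ : S → ℝ) : ℝ :=
  ∑' t : ℕ, γ ^ t *
    ∑ s : S, ∑ a : A, ∑ s' : S, stateDist P π ρ₀ t s * π s a * P s a s' * r s a s'

/-- Value function `V^π_P`. -/
noncomputable def valueFn (γ : ℝ) (r : S → A → S → ℝ) (P : S → A → S → ℝ) (π : S → A → ℝ) :
    S → ℝ :=
  fun s => ret γ r P π (fun s'' => if s'' = s then 1 else 0)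

/-- Expected discounted return `J^π_P = E_{ρ₀}[V^π_P]`. -/
noncomputable def expRet (γ : ℝ) (r : S → A → S → ℝ) (P : S → A → S → ℝ) (π : S → A → ℝ)
    (ρ₀ : S → ℝ) : ℝ :=
  ∑ s : S, ρ₀ s * valueFn γ r P π s

/-- Total variation distance `(1/2) ∑ |p - q|`. -/
noncomputable def tvDist {X : Type*} [Fintype X] (p q : X → ℝ) : ℝ :=
  (1 / 2) * ∑ x : X, |p x - q x|

/-- Kullback–Leibler divergence on a finite set. -/
noncomputable def klDiv' {X : Type*} [Fintype X] (p q : X → ℝ) : ℝ :=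
  ∑ x : X, p x * Real.log (p x / q x)

/-- Jensen–Shannon divergence on a finite set. -/
noncomputable def jsDiv {X : Type*} [Fintype X] (p q : X → ℝ) : ℝ :=
  (1 / 2) * klDiv' p (fun x => (p x + q x) / 2) +
    (1 / 2) * klDiv' q (fun x => (p x + q x) / 2)

/-- `π` is a stochastic policy. -/
def IsStochPol (π : S → A → ℝ) : Prop :=
  ∀ s, (∀ a, 0 ≤ π s a) ∧ ∑ a : A, π s a = 1

/-- `P` is a stochastic transition kernel. -/
def IsStochKer (P : S → A → S → ℝ) : Prop :=
  ∀ s a, (∀ s', 0 ≤ P s a s') ∧ ∑ s' : S, P s a s' = 1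

/-- `p` is a probability mass function. -/
def IsProb {X : Type*} [Fintype X] (p : X → ℝ) : Prop :=
  (∀ x, 0 ≤ p x) ∧ ∑ x : X, p x = 1

end MDP

open Real in
-- binary Pinsker, case α = 1
lemma bp_one {β : ℝ} (hβ0 : 0 < β) (hβ1 : β ≤ 1) :
    2 * (1 - β)^2 ≤ -Real.log β := by
  set φ : ℝ → ℝ := fun x => -Real.log x - 2*(1-x)^2 with hφ
  have hderiv : ∀ x ∈ Set.Icc β 1, HasDerivAt φ (-x⁻¹ + 4*(1-x)) x := by
    intro x hx
    have hx0 : x ≠ 0 := ne_of_gt (lt_of_lt_of_le hβ0 hx.1)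
    have h1 : HasDerivAt (fun x : ℝ => -Real.log x) (-x⁻¹) x := (Real.hasDerivAt_log hx0).neg
    have h2 : HasDerivAt (fun x : ℝ => 2*(1-x)^2) (-(4*(1-x))) x := by
      have : HasDerivAt (fun x : ℝ => (1-x)) (-1) x := by
        simpa using (hasDerivAt_id x).const_sub (1:ℝ)
      have := (this.pow 2).const_mul (2:ℝ)
      exact this.congr_deriv (by ring)
    have := h1.sub h2
    exact this.congr_deriv (by ring)
  have hanti : AntitoneOn φ (Set.Icc β 1) := by
    apply antitoneOn_of_deriv_nonpos (convex_Icc _ _)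
    · exact fun x hx => (hderiv x hx).continuousAt.continuousWithinAt
    · intro x hx
      rw [interior_Icc] at hx
      exact (hderiv x (Set.mem_Icc_of_Ioo hx)).differentiableAt.differentiableWithinAt
    · intro x hx
      rw [interior_Icc] at hx
      rw [(hderiv x (Set.mem_Icc_of_Ioo hx)).deriv]
      have hx0 : 0 < x := lt_trans hβ0 hx.1
      rw [← sub_nonpos]
      have : -x⁻¹ + 4*(1-x) - 0 = -((2*x-1)^2)/x := by field_simp; ring
      rw [this]
      apply div_nonpos_of_nonpos_of_nonneg (by nlinarith [sq_nonneg (2*x-1)]) hx0.le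
  have := hanti (Set.mem_Icc.2 ⟨le_refl β, hβ1⟩) (Set.mem_Icc.2 ⟨hβ1, le_refl 1⟩) hβ1
  simp only [φ, Real.log_one] at this
  linarith

lemma bp_lt {α β : ℝ} (hβ0 : 0 < β) (hβα : β ≤ α) (hα1 : α < 1) :
    2 * (α - β)^2 ≤ α * Real.log α - α * Real.log β
      + (1-α) * Real.log (1-α) - (1-α) * Real.log (1-β) := by
  set g : ℝ → ℝ := fun x => α * Real.log α - α * Real.log x
      + (1-α) * Real.log (1-α) - (1-α) * Real.log (1-x) - 2*(α-x)^2 with hg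
  have hderiv : ∀ x ∈ Set.Icc β α, HasDerivAt g (-(α * x⁻¹) + (1-α)*(1-x)⁻¹ + 4*(α-x)) x := by
    intro x hx
    have hx0 : x ≠ 0 := ne_of_gt (lt_of_lt_of_le hβ0 hx.1)
    have hx1 : (1:ℝ) - x ≠ 0 := ne_of_gt (by linarith [hx.2, hα1])
    have h1 : HasDerivAt (fun x : ℝ => α * Real.log x) (α * x⁻¹) x :=
      (Real.hasDerivAt_log hx0).const_mul α
    have h2 : HasDerivAt (fun x : ℝ => (1-α) * Real.log (1-x)) (-((1-α)*(1-x)⁻¹)) x := by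
      have hlin : HasDerivAt (fun x : ℝ => (1-x)) (-1) x := by
        simpa using (hasDerivAt_id x).const_sub (1:ℝ)
      have := ((Real.hasDerivAt_log hx1).comp x hlin).const_mul (1-α)
      exact this.congr_deriv (by ring)
    have h3 : HasDerivAt (fun x : ℝ => 2*(α-x)^2) (-(4*(α-x))) x := by
      have hlin : HasDerivAt (fun x : ℝ => (α-x)) (-1) x := by
        simpa using (hasDerivAt_id x).const_sub α
      have := (hlin.pow 2).const_mul (2:ℝ)
      exact this.congr_deriv (by ring)
    have := ((((hasDerivAt_const x (α * Real.log α)).sub h1).add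
      (hasDerivAt_const x ((1-α) * Real.log (1-α)))).sub h2).sub h3
    exact this.congr_deriv (by ring)
  have hanti : AntitoneOn g (Set.Icc β α) := by
    apply antitoneOn_of_deriv_nonpos (convex_Icc _ _)
    · exact fun x hx => (hderiv x hx).continuousAt.continuousWithinAt
    · intro x hx
      rw [interior_Icc] at hx
      exact (hderiv x (Set.mem_Icc_of_Ioo hx)).differentiableAt.differentiableWithinAt
    · intro x hx
      rw [interior_Icc] at hx
      rw [(hderiv x (Set.mem_Icc_of_Ioo hx)).deriv]
      have hx0 : 0 < x := lt_trans hβ0 hx.1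
      have hx1 : 0 < 1 - x := by linarith [hx.2, hα1]
      have hxα : x ≤ α := hx.2.le
      rw [← sub_nonpos]
      have : -(α * x⁻¹) + (1-α)*(1-x)⁻¹ + 4*(α-x) - 0
          = ((x - α) * (1 - 4*x*(1-x))) / (x*(1-x)) := by
        field_simp; ring
      rw [this]
      apply div_nonpos_of_nonpos_of_nonneg
      · nlinarith [sq_nonneg (2*x-1)]
      · positivity
  have := hanti (Set.mem_Icc.2 ⟨le_refl β, hβα⟩) (Set.mem_Icc.2 ⟨hβα, le_refl α⟩) hβα
  simp only [g] at this
  nlinarith [this]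

-- binary Pinsker combined
lemma bp {α β : ℝ} (hβ0 : 0 < β) (hβα : β ≤ α) (hα1 : α ≤ 1) :
    2 * (α - β)^2 ≤ α * Real.log (α / β) + (1-α) * Real.log ((1-α) / (1-β)) := by
  have hα0 : 0 < α := lt_of_lt_of_le hβ0 hβα
  rcases eq_or_lt_of_le hα1 with h1 | h1
  · subst h1
    rcases eq_or_lt_of_le hβα with hb | hb
    · subst hb; simp
    · have h := bp_one hβ0 hβα
      have : Real.log (1 / β) = -Real.log β := by
        rw [one_div, Real.log_inv]
      simp only [this]
      have h2 : (1:ℝ) - 1 = 0 := by ring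
      rw [h2]
      simpa using h
  · rcases eq_or_lt_of_le hβα with hb | hb
    · subst hb
      rw [div_self (ne_of_gt hβ0), div_self (ne_of_gt (by linarith : (0:ℝ) < 1 - β))]
      simp
    · have h := bp_lt hβ0 hβα h1
      rw [Real.log_div (ne_of_gt hα0) (ne_of_gt hβ0),
        Real.log_div (ne_of_gt (by linarith : (0:ℝ) < 1 - α)) (ne_of_gt (by linarith : (0:ℝ) < 1 - β))]
      nlinarith [h]


open Classical in
-- log-sum inequality over a finset
lemma logsum {X : Type*} [Fintype X] (T : Finset X) (p q : X → ℝ)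
    (hp : ∀ x, 0 ≤ p x) (hq : ∀ x, 0 ≤ q x) (hac : ∀ x, q x = 0 → p x = 0) :
    (∑ x ∈ T, p x) * Real.log ((∑ x ∈ T, p x) / (∑ x ∈ T, q x)) ≤
      ∑ x ∈ T, p x * Real.log (p x / q x) := by
  classical
  set T' : Finset X := T.filter (fun x => q x ≠ 0) with hT'
  have hpsum : ∑ x ∈ T', p x = ∑ x ∈ T, p x := by
    apply Finset.sum_filter_of_ne
    intro x hx hpx
    intro hqx
    exact hpx (hac x hqx)
  have hqsum : ∑ x ∈ T', q x = ∑ x ∈ T, q x := by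
    apply Finset.sum_filter_of_ne
    intro x hx hqx h; exact hqx h
  have hklsum : ∑ x ∈ T', p x * Real.log (p x / q x) = ∑ x ∈ T, p x * Real.log (p x / q x) := by
    apply Finset.sum_filter_of_ne
    intro x hx hne hqx
    exact hne (by rw [hac x hqx]; ring)
  rw [← hpsum, ← hqsum, ← hklsum]
  have hq' : ∀ x ∈ T', 0 < q x := fun x hx =>
    lt_of_le_of_ne (hq x) (Ne.symm (Finset.mem_filter.1 hx).2)
  set Q := ∑ x ∈ T', q x with hQ
  rcases eq_or_lt_of_le (Finset.sum_nonneg (fun x _ => hq x) : 0 ≤ Q) with hQ0 | hQ0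
  · -- Q = 0 → T' empty
    have hempty : T' = ∅ := by
      by_contra h
      obtain ⟨x, hx⟩ := Finset.nonempty_of_ne_empty h
      have := Finset.single_le_sum (fun y _ => hq y) hx
      have := hq' x hx
      rw [← hQ] at *
      linarith
    simp [hempty]
  · -- Jensen
    have key := Real.convexOn_mul_log.map_sum_le (t := T') (w := fun x => q x / Q)
      (p := fun x => p x / q x)
      (fun x _ => div_nonneg (hq x) hQ0.le)
      (by rw [← Finset.sum_div, div_self (ne_of_gt hQ0)])
      (fun x hx => Set.mem_Ici.2 (div_nonneg (hp x) (hq x)))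
    simp only [smul_eq_mul] at key
    have e1 : ∑ x ∈ T', q x / Q * (p x / q x) = (∑ x ∈ T', p x) / Q := by
      rw [Finset.sum_div]
      apply Finset.sum_congr rfl
      intro x hx
      have hqx := (hq' x hx).ne'
      field_simp
    have e2 : ∑ x ∈ T', q x / Q * (p x / q x * Real.log (p x / q x))
        = (∑ x ∈ T', p x * Real.log (p x / q x)) / Q := by
      rw [Finset.sum_div]
      apply Finset.sum_congr rfl
      intro x hx
      have := (hq' x hx).ne'
      field_simp
    rw [e1, e2] at key
    have := mul_le_mul_of_nonneg_left key hQ0.le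
    rw [mul_div_cancel₀ _ (ne_of_gt hQ0)] at this
    calc (∑ x ∈ T', p x) * Real.log ((∑ x ∈ T', p x) / Q)
        = Q * ((∑ x ∈ T', p x) / Q * Real.log ((∑ x ∈ T', p x) / Q)) := by
          have hQne : Q ≠ 0 := ne_of_gt hQ0
          field_simp
      _ ≤ ∑ x ∈ T', p x * Real.log (p x / q x) := this

-- Pinsker's inequality on a finite set
lemma pinsker {X : Type*} [Fintype X] (p q : X → ℝ) (hp : IsProb p) (hq : IsProb q)
    (hac : ∀ x, q x = 0 → p x = 0) :
    ∑ x : X, |p x - q x| ≤ Real.sqrt (2 * klDiv' p q) := by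
  classical
  set A : Finset X := Finset.univ.filter (fun x => q x < p x) with hA
  set α := ∑ x ∈ A, p x with hα
  set β := ∑ x ∈ A, q x with hβ
  have hsplit : ∀ f : X → ℝ, ∑ x ∈ A, f x + ∑ x ∈ Finset.univ.filter (fun x => ¬ q x < p x), f x
      = ∑ x : X, f x := fun f => Finset.sum_filter_add_sum_filter_not _ _ f
  have hpA : ∑ x ∈ Finset.univ.filter (fun x => ¬ q x < p x), p x = 1 - α := by
    have := hsplit p; rw [hp.2] at this; linarith
  have hqA : ∑ x ∈ Finset.univ.filter (fun x => ¬ q x < p x), q x = 1 - β := by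
    have := hsplit q; rw [hq.2] at this; linarith
  have htv : ∑ x : X, |p x - q x| = 2 * (α - β) := by
    rw [← hsplit (fun x => |p x - q x|)]
    have e1 : ∑ x ∈ A, |p x - q x| = α - β := by
      rw [hα, hβ, ← Finset.sum_sub_distrib]
      apply Finset.sum_congr rfl
      intro x hx
      exact abs_of_pos (sub_pos.2 (Finset.mem_filter.1 hx).2)
    have e2 : ∑ x ∈ Finset.univ.filter (fun x => ¬ q x < p x), |p x - q x|
        = (1 - β) - (1 - α) := by
      rw [← hqA, ← hpA, ← Finset.sum_sub_distrib]
      apply Finset.sum_congr rfl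
      intro x hx
      have := (Finset.mem_filter.1 hx).2
      rw [abs_of_nonpos (by linarith [not_lt.1 this])]
      ring
    rw [e1, e2]; ring
  have hβα : β ≤ α := by
    rw [hα, hβ]
    apply Finset.sum_le_sum
    intro x hx
    exact (Finset.mem_filter.1 hx).2.le
  rcases eq_or_lt_of_le hβα with heq | hlt
  · rw [htv, ← heq]
    simp [Real.sqrt_nonneg]
  · -- A nonempty, β > 0
    have hAne : A.Nonempty := by
      by_contra h
      rw [Finset.not_nonempty_iff_eq_empty] at h
      rw [hα, hβ, h] at hlt
      simp at hlt
    have hβ0 : 0 < β := by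
      obtain ⟨x, hx⟩ := hAne
      have hqx : 0 < q x := by
        rcases lt_or_eq_of_le (hq.1 x) with h | h
        · exact h
        · exfalso
          have hpx := hac x h.symm
          have := (Finset.mem_filter.1 hx).2
          rw [hpx, ← h] at this
          exact lt_irrefl _ this
      calc (0:ℝ) < q x := hqx
        _ ≤ β := Finset.single_le_sum (fun y _ => hq.1 y) hx
    have hα1 : α ≤ 1 := by
      rw [hα, ← hp.2]
      exact Finset.sum_le_sum_of_subset_of_nonneg (Finset.subset_univ A)
        (fun x _ _ => hp.1 x)
    have hkl : α * Real.log (α / β) + (1-α) * Real.log ((1-α)/(1-β)) ≤ klDiv' p q := by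
      rw [klDiv', ← hsplit (fun x => p x * Real.log (p x / q x))]
      have h1 := logsum A p q hp.1 hq.1 hac
      have h2 := logsum (Finset.univ.filter (fun x => ¬ q x < p x)) p q hp.1 hq.1 hac
      rw [hpA, hqA] at h2
      rw [← hα, ← hβ] at h1
      linarith
    have hbp := bp hβ0 hβα hα1
    have h4 : 2 * klDiv' p q ≥ (2*(α-β))^2 := by nlinarith
    rw [htv]
    calc 2 * (α - β) = Real.sqrt ((2*(α-β))^2) := by
          rw [Real.sqrt_sq (by linarith)]
      _ ≤ Real.sqrt (2 * klDiv' p q) := Real.sqrt_le_sqrt (by linarith)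


section AUX
variable {S A : Type*} [Fintype S] [Fintype A] [DecidableEq S]
variable {P : S → A → S → ℝ} {π : S → A → ℝ} {ρ : S → ℝ}

lemma sd_prob (hP : IsStochKer P) (hπ : IsStochPol π) (hρ : IsProb ρ) (t : ℕ) :
    IsProb (stateDist P π ρ t) := by
  induction t with
  | zero => exact hρ
  | succ t ih =>
    constructor
    · intro s
      apply Finset.sum_nonneg; intro s' _
      apply Finset.sum_nonneg; intro a _
      exact mul_nonneg (mul_nonneg (ih.1 s') ((hπ s').1 a)) ((hP s' a).1 s)
    · show ∑ s : S, stepDist P π (stateDist P π ρ t) s = 1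
      have h : ∑ s : S, stepDist P π (stateDist P π ρ t) s
          = ∑ s' : S, ∑ a : A, ∑ s : S, stateDist P π ρ t s' * π s' a * P s' a s := by
        simp only [stepDist]
        rw [Finset.sum_comm]
        apply Finset.sum_congr rfl
        intro s' _
        rw [Finset.sum_comm]
      rw [h]
      have h1 : ∀ s' a, ∑ s : S, stateDist P π ρ t s' * π s' a * P s' a s
          = stateDist P π ρ t s' * π s' a := by
        intro s' a; rw [← Finset.mul_sum, (hP s' a).2, mul_one]
      simp only [h1]
      have h2 : ∀ s', ∑ a : A, stateDist P π ρ t s' * π s' a = stateDist P π ρ t s' := by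
        intro s'; rw [← Finset.mul_sum, (hπ s').2, mul_one]
      simp only [h2, ih.2]

lemma sd_le_one (hP : IsStochKer P) (hπ : IsStochPol π) (hρ : IsProb ρ) (t : ℕ) (s : S) :
    stateDist P π ρ t s ≤ 1 := by
  have h := sd_prob hP hπ hρ t
  calc stateDist P π ρ t s ≤ ∑ s' : S, stateDist P π ρ t s' :=
        Finset.single_le_sum (fun s' _ => h.1 s') (Finset.mem_univ s)
    _ = 1 := h.2

lemma sum3 (hP : IsStochKer P) (hπ : IsStochPol π) (hρ' : IsProb ρ) :
    ∑ s : S, ∑ a : A, ∑ s' : S, ρ s * π s a * P s a s' = 1 := by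
  have h1 : ∀ s a, ∑ s' : S, ρ s * π s a * P s a s' = ρ s * π s a := by
    intro s a; rw [← Finset.mul_sum, (hP s a).2, mul_one]
  simp only [h1]
  have h2 : ∀ s, ∑ a : A, ρ s * π s a = ρ s := by
    intro s; rw [← Finset.mul_sum, (hπ s).2, mul_one]
  simp only [h2, hρ'.2]

lemma Gbound (hP : IsStochKer P) (hπ : IsStochPol π) (hρ : IsProb ρ)
    {r : S → A → S → ℝ} {Rmax : ℝ} (hr : ∀ s a s', |r s a s'| ≤ Rmax) (t : ℕ) :
    |∑ s : S, ∑ a : A, ∑ s' : S, stateDist P π ρ t s * π s a * P s a s' * r s a s'| ≤ Rmax := by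
  have hprob := sd_prob hP hπ hρ t
  have key : ∀ s a s', |stateDist P π ρ t s * π s a * P s a s' * r s a s'|
      ≤ stateDist P π ρ t s * π s a * P s a s' * Rmax := by
    intro s a s'
    rw [abs_mul]
    have hnn : 0 ≤ stateDist P π ρ t s * π s a * P s a s' :=
      mul_nonneg (mul_nonneg (hprob.1 s) ((hπ s).1 a)) ((hP s a).1 s')
    rw [abs_of_nonneg hnn]
    exact mul_le_mul_of_nonneg_left (hr s a s') hnn
  calc |∑ s : S, ∑ a : A, ∑ s' : S, stateDist P π ρ t s * π s a * P s a s' * r s a s'|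
      ≤ ∑ s : S, ∑ a : A, ∑ s' : S, |stateDist P π ρ t s * π s a * P s a s' * r s a s'| := by
        refine (Finset.abs_sum_le_sum_abs _ _).trans (Finset.sum_le_sum fun s _ => ?_)
        refine (Finset.abs_sum_le_sum_abs _ _).trans (Finset.sum_le_sum fun a _ => ?_)
        exact Finset.abs_sum_le_sum_abs _ _
    _ ≤ ∑ s : S, ∑ a : A, ∑ s' : S, stateDist P π ρ t s * π s a * P s a s' * Rmax := by
        refine Finset.sum_le_sum fun s _ => Finset.sum_le_sum fun a _ =>
          Finset.sum_le_sum fun s' _ => key s a s'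
    _ = (∑ s : S, ∑ a : A, ∑ s' : S, stateDist P π ρ t s * π s a * P s a s') * Rmax := by
        simp only [Finset.sum_mul]
    _ = Rmax := by rw [sum3 hP hπ hprob, one_mul]

lemma visit_mul_sum {γ : ℝ} (hγ0 : 0 ≤ γ) (hγ1 : γ < 1)
    (hP : IsStochKer P) (hπ : IsStochPol π) (hρ : IsProb ρ) (r : S → A → S → ℝ) :
    ∑ x : S × A × S, visitT γ P π ρ x * r x.1 x.2.1 x.2.2 = (1 - γ) * ret γ r P π ρ := by
  have hsumm : ∀ x : S × A × S, Summable (fun t : ℕ =>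
      γ ^ t * stateDist P π ρ t x.1 * π x.1 x.2.1 * P x.1 x.2.1 x.2.2 * r x.1 x.2.1 x.2.2) := by
    intro x
    apply Summable.of_norm_bounded (g := fun t => γ ^ t * |π x.1 x.2.1 * P x.1 x.2.1 x.2.2 * r x.1 x.2.1 x.2.2|)
      ((summable_geometric_of_lt_one hγ0 hγ1).mul_right _)
    intro t
    rw [Real.norm_eq_abs]
    have he : γ ^ t * stateDist P π ρ t x.1 * π x.1 x.2.1 * P x.1 x.2.1 x.2.2 * r x.1 x.2.1 x.2.2
        = (γ ^ t * stateDist P π ρ t x.1) * (π x.1 x.2.1 * P x.1 x.2.1 x.2.2 * r x.1 x.2.1 x.2.2) := by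
      ring
    rw [he, abs_mul]
    apply mul_le_mul_of_nonneg_right _ (abs_nonneg _)
    rw [abs_of_nonneg (mul_nonneg (pow_nonneg hγ0 t) ((sd_prob hP hπ hρ t).1 x.1))]
    calc γ ^ t * stateDist P π ρ t x.1 ≤ γ ^ t * 1 :=
          mul_le_mul_of_nonneg_left (sd_le_one hP hπ hρ t x.1) (pow_nonneg hγ0 t)
      _ = γ ^ t := mul_one _
  calc ∑ x : S × A × S, visitT γ P π ρ x * r x.1 x.2.1 x.2.2
      = (1 - γ) * ∑ x : S × A × S, ∑' t : ℕ,
          γ ^ t * stateDist P π ρ t x.1 * π x.1 x.2.1 * P x.1 x.2.1 x.2.2 * r x.1 x.2.1 x.2.2 := by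
        rw [Finset.mul_sum]
        apply Finset.sum_congr rfl
        intro x _
        rw [visitT, mul_assoc, ← tsum_mul_right]
    _ = (1 - γ) * ∑' t : ℕ, ∑ x : S × A × S,
          γ ^ t * stateDist P π ρ t x.1 * π x.1 x.2.1 * P x.1 x.2.1 x.2.2 * r x.1 x.2.1 x.2.2 := by
        rw [Summable.tsum_finsetSum (fun x _ => hsumm x)]
    _ = (1 - γ) * ret γ r P π ρ := by
        rw [ret]
        congr 1
        apply tsum_congr
        intro t
        rw [Fintype.sum_prod_type]
        simp only [Fintype.sum_prod_type, Finset.mul_sum]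
        apply Finset.sum_congr rfl; intro s _
        apply Finset.sum_congr rfl; intro a _
        apply Finset.sum_congr rfl; intro s' _
        ring

lemma visit_prob {γ : ℝ} (hγ0 : 0 ≤ γ) (hγ1 : γ < 1)
    (hP : IsStochKer P) (hπ : IsStochPol π) (hρ : IsProb ρ) :
    IsProb (visitT γ P π ρ) := by
  constructor
  · intro x
    apply mul_nonneg (by linarith)
    apply tsum_nonneg
    intro t
    exact mul_nonneg (mul_nonneg (mul_nonneg (pow_nonneg hγ0 t)
      ((sd_prob hP hπ hρ t).1 x.1)) ((hπ x.1).1 x.2.1)) ((hP x.1 x.2.1).1 x.2.2)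
  · have h := visit_mul_sum hγ0 hγ1 hP hπ hρ (fun _ _ _ => (1:ℝ))
    simp only [mul_one] at h
    rw [h, ret]
    simp only [mul_one]
    have : ∀ t : ℕ, γ ^ t * (∑ s : S, ∑ a : A, ∑ s' : S,
        stateDist P π ρ t s * π s a * P s a s') = γ ^ t := by
      intro t
      rw [sum3 hP hπ (sd_prob hP hπ hρ t), mul_one]
    rw [tsum_congr this, tsum_geometric_of_lt_one hγ0 hγ1,
      mul_inv_cancel₀ (by linarith : (1:ℝ) - γ ≠ 0)]


lemma sd_linear (P : S → A → S → ℝ) (π : S → A → ℝ) (ρ₀ : S → ℝ) (t : ℕ) (s : S) :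
    stateDist P π ρ₀ t s
      = ∑ s0 : S, ρ₀ s0 * stateDist P π (fun s'' => if s'' = s0 then 1 else 0) t s := by
  induction t generalizing s with
  | zero =>
    show ρ₀ s = ∑ s0 : S, ρ₀ s0 * (if s = s0 then 1 else 0)
    simp [mul_ite]
  | succ t ih =>
    have lhs : stateDist P π ρ₀ (t+1) s = stepDist P π (stateDist P π ρ₀ t) s := rfl
    have rhs : ∀ s0 : S, stateDist P π (fun s'' => if s'' = s0 then 1 else 0) (t+1) s
        = stepDist P π (stateDist P π (fun s'' => if s'' = s0 then 1 else 0) t) s := fun _ => rfl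
    simp only [lhs, rhs, stepDist, ih]
    have step1 : ∀ s' : S, ∑ a : A,
        (∑ s0 : S, ρ₀ s0 * stateDist P π (fun s'' => if s'' = s0 then 1 else 0) t s')
          * π s' a * P s' a s
        = ∑ s0 : S, ∑ a : A,
            ρ₀ s0 * (stateDist P π (fun s'' => if s'' = s0 then 1 else 0) t s'
              * π s' a * P s' a s) := by
      intro s'
      rw [Finset.sum_comm]
      apply Finset.sum_congr rfl
      intro a _
      rw [Finset.sum_mul, Finset.sum_mul]
      apply Finset.sum_congr rfl
      intro s0 _
      ring
    simp only [step1]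
    rw [Finset.sum_comm]
    apply Finset.sum_congr rfl
    intro s0 _
    rw [Finset.mul_sum]
    apply Finset.sum_congr rfl
    intro s' _
    rw [Finset.mul_sum]

lemma delta_prob (s0 : S) : IsProb (fun s'' : S => if s'' = s0 then (1:ℝ) else 0) := by
  constructor
  · intro x; dsimp only; split <;> norm_num
  · simp

lemma sum_comm4 {α β γ' δ' : Type*} [Fintype α] [Fintype β] [Fintype γ'] [Fintype δ']
    (f : α → β → γ' → δ' → ℝ) :
    ∑ a : α, ∑ b : β, ∑ c : γ', ∑ d : δ', f a b c d
      = ∑ d : δ', ∑ a : α, ∑ b : β, ∑ c : γ', f a b c d := by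
  calc ∑ a : α, ∑ b : β, ∑ c : γ', ∑ d : δ', f a b c d
      = ∑ a : α, ∑ b : β, ∑ d : δ', ∑ c : γ', f a b c d := by
        apply Finset.sum_congr rfl; intro a _
        apply Finset.sum_congr rfl; intro b _
        rw [Finset.sum_comm]
    _ = ∑ a : α, ∑ d : δ', ∑ b : β, ∑ c : γ', f a b c d := by
        apply Finset.sum_congr rfl; intro a _
        rw [Finset.sum_comm]
    _ = ∑ d : δ', ∑ a : α, ∑ b : β, ∑ c : γ', f a b c d := by
        rw [Finset.sum_comm]

lemma expRet_eq_ret {P : S → A → S → ℝ} {π : S → A → ℝ} {ρ₀ : S → ℝ} {γ : ℝ}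
    (hγ0 : 0 ≤ γ) (hγ1 : γ < 1)
    (hP : IsStochKer P) (hπ : IsStochPol π) (hρ : IsProb ρ₀)
    {r : S → A → S → ℝ} {Rmax : ℝ} (hr : ∀ s a s', |r s a s'| ≤ Rmax) :
    expRet γ r P π ρ₀ = ret γ r P π ρ₀ := by
  set δ : S → S → ℝ := fun s0 s'' => if s'' = s0 then 1 else 0 with hδ
  set G : S → ℕ → ℝ := fun s0 t => ∑ s : S, ∑ a : A, ∑ s' : S,
      stateDist P π (δ s0) t s * π s a * P s a s' * r s a s' with hG
  have hsumm : ∀ s0 : S, Summable (fun t : ℕ => ρ₀ s0 * (γ ^ t * G s0 t)) := by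
    intro s0
    apply Summable.of_norm_bounded (g := fun t => γ ^ t * (|ρ₀ s0| * Rmax))
      ((summable_geometric_of_lt_one hγ0 hγ1).mul_right _)
    intro t
    rw [Real.norm_eq_abs, abs_mul, abs_mul, abs_of_nonneg (pow_nonneg hγ0 t)]
    have hGb : |G s0 t| ≤ Rmax := Gbound hP hπ (delta_prob s0) hr t
    calc |ρ₀ s0| * (γ ^ t * |G s0 t|)
        ≤ |ρ₀ s0| * (γ ^ t * Rmax) := by
          apply mul_le_mul_of_nonneg_left _ (abs_nonneg _)
          exact mul_le_mul_of_nonneg_left hGb (pow_nonneg hγ0 t)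
      _ = γ ^ t * (|ρ₀ s0| * Rmax) := by ring
  have hGlin : ∀ t : ℕ, (∑ s : S, ∑ a : A, ∑ s' : S,
      stateDist P π ρ₀ t s * π s a * P s a s' * r s a s') = ∑ s0 : S, ρ₀ s0 * G s0 t := by
    intro t
    simp only [sd_linear P π ρ₀ t, hG]
    have step1 : ∀ s : S, ∀ a : A, ∀ s' : S,
        (∑ s0 : S, ρ₀ s0 * stateDist P π (δ s0) t s) * π s a * P s a s' * r s a s'
        = ∑ s0 : S, ρ₀ s0 * (stateDist P π (δ s0) t s * π s a * P s a s' * r s a s') := by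
      intro s a s'
      rw [Finset.sum_mul, Finset.sum_mul, Finset.sum_mul]
      apply Finset.sum_congr rfl
      intro s0 _
      ring
    change ∑ s : S, ∑ a : A, ∑ s' : S,
      (∑ s0 : S, ρ₀ s0 * stateDist P π (δ s0) t s) * π s a * P s a s' * r s a s' = _
    simp only [step1]
    rw [sum_comm4]
    apply Finset.sum_congr rfl
    intro s0 _
    simp only [Finset.mul_sum]
  calc expRet γ r P π ρ₀
      = ∑ s0 : S, ρ₀ s0 * ∑' t : ℕ, γ ^ t * G s0 t := rfl
    _ = ∑ s0 : S, ∑' t : ℕ, ρ₀ s0 * (γ ^ t * G s0 t) := by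
        apply Finset.sum_congr rfl
        intro s0 _
        rw [tsum_mul_left]
    _ = ∑' t : ℕ, ∑ s0 : S, ρ₀ s0 * (γ ^ t * G s0 t) := by
        rw [Summable.tsum_finsetSum (fun s0 _ => hsumm s0)]
    _ = ret γ r P π ρ₀ := by
        rw [ret]
        apply tsum_congr
        intro t
        rw [hGlin t, Finset.mul_sum]
        apply Finset.sum_congr rfl
        intro s0 _
        ring


end AUX


theorem stmt3 {S A : Type*} [Fintype S] [Fintype A] [DecidableEq S]
    (γ : ℝ) (hγ0 : 0 ≤ γ) (hγ1 : γ < 1)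
    (r Ps Pt : S → A → S → ℝ) (π : S → A → ℝ) (ρ₀ : S → ℝ)
    (hπ : IsStochPol π) (hPs : IsStochKer Ps) (hPt : IsStochKer Pt) (hρ : IsProb ρ₀)
    (Rmax : ℝ) (hr : ∀ s a s', |r s a s'| ≤ Rmax)
    (hac : ∀ x : S × A × S, visitT γ Pt π ρ₀ x = 0 → visitT γ Ps π ρ₀ x = 0) :
    expRet γ r Pt π ρ₀ ≥
      expRet γ r Ps π ρ₀ -
        (Real.sqrt 2 * Rmax / (1 - γ)) *
          Real.sqrt (klDiv' (visitT γ Ps π ρ₀) (visitT γ Pt π ρ₀)) := by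
  rcases isEmpty_or_nonempty S with hS | hS
  · simp [expRet, klDiv', Finset.univ_eq_empty]
  rcases isEmpty_or_nonempty A with hA | hA
  · simp [expRet, valueFn, ret, klDiv', Finset.univ_eq_empty]
  obtain ⟨s₀⟩ := hS
  obtain ⟨a₀⟩ := hA
  have hR0 : 0 ≤ Rmax := le_trans (abs_nonneg _) (hr s₀ a₀ s₀)
  have h1γ : (0:ℝ) < 1 - γ := by linarith
  have hνs := visit_prob hγ0 hγ1 hPs hπ hρ
  have hνt := visit_prob hγ0 hγ1 hPt hπ hρ
  have hps := pinsker _ _ hνs hνt hac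
  have hAs := visit_mul_sum hγ0 hγ1 hPs hπ hρ r
  have hAt := visit_mul_sum hγ0 hγ1 hPt hπ hρ r
  have hES := expRet_eq_ret hγ0 hγ1 hPs hπ hρ hr
  have hET := expRet_eq_ret hγ0 hγ1 hPt hπ hρ hr
  have hdiff : (1 - γ) * (expRet γ r Ps π ρ₀ - expRet γ r Pt π ρ₀)
      = ∑ x : S × A × S, (visitT γ Ps π ρ₀ x - visitT γ Pt π ρ₀ x) * r x.1 x.2.1 x.2.2 := by
    rw [hES, hET, mul_sub, ← hAs, ← hAt, ← Finset.sum_sub_distrib]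
    apply Finset.sum_congr rfl
    intro x _
    ring
  have hb1 : ∑ x : S × A × S, (visitT γ Ps π ρ₀ x - visitT γ Pt π ρ₀ x) * r x.1 x.2.1 x.2.2
      ≤ Rmax * ∑ x : S × A × S, |visitT γ Ps π ρ₀ x - visitT γ Pt π ρ₀ x| := by
    rw [Finset.mul_sum]
    apply Finset.sum_le_sum
    intro x _
    calc (visitT γ Ps π ρ₀ x - visitT γ Pt π ρ₀ x) * r x.1 x.2.1 x.2.2
        ≤ |(visitT γ Ps π ρ₀ x - visitT γ Pt π ρ₀ x) * r x.1 x.2.1 x.2.2| := le_abs_self _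
      _ = |visitT γ Ps π ρ₀ x - visitT γ Pt π ρ₀ x| * |r x.1 x.2.1 x.2.2| := abs_mul _ _
      _ ≤ |visitT γ Ps π ρ₀ x - visitT γ Pt π ρ₀ x| * Rmax :=
          mul_le_mul_of_nonneg_left (hr _ _ _) (abs_nonneg _)
      _ = Rmax * |visitT γ Ps π ρ₀ x - visitT γ Pt π ρ₀ x| := mul_comm _ _
  have hb2 : Rmax * ∑ x : S × A × S, |visitT γ Ps π ρ₀ x - visitT γ Pt π ρ₀ x|
      ≤ Rmax * Real.sqrt (2 * klDiv' (visitT γ Ps π ρ₀) (visitT γ Pt π ρ₀)) :=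
    mul_le_mul_of_nonneg_left hps hR0
  have hsq : Real.sqrt (2 * klDiv' (visitT γ Ps π ρ₀) (visitT γ Pt π ρ₀))
      = Real.sqrt 2 * Real.sqrt (klDiv' (visitT γ Ps π ρ₀) (visitT γ Pt π ρ₀)) :=
    Real.sqrt_mul (by norm_num) _
  have key : (1 - γ) * (expRet γ r Ps π ρ₀ - expRet γ r Pt π ρ₀)
      ≤ Rmax * (Real.sqrt 2 * Real.sqrt (klDiv' (visitT γ Ps π ρ₀) (visitT γ Pt π ρ₀))) := by
    rw [hdiff]
    rw [hsq] at hb2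
    linarith
  have h3 : expRet γ r Ps π ρ₀ - expRet γ r Pt π ρ₀
      ≤ Rmax * (Real.sqrt 2 * Real.sqrt (klDiv' (visitT γ Ps π ρ₀) (visitT γ Pt π ρ₀))) / (1 - γ) := by
    rw [le_div_iff₀ h1γ, mul_comm]
    exact key
  have h4 : (Real.sqrt 2 * Rmax / (1 - γ)) * Real.sqrt (klDiv' (visitT γ Ps π ρ₀) (visitT γ Pt π ρ₀))
      = Rmax * (Real.sqrt 2 * Real.sqrt (klDiv' (visitT γ Ps π ρ₀) (visitT γ Pt π ρ₀))) / (1 - γ) := by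
    ring
  rw [ge_iff_le, h4]
  linarith
end

section
/- For any policy π with value function V^π_{P_s} under kernel P_s, any kernel P_t, and ε = max_s |E_{a∼π, s'∼P_t}[r(s,a,s') + γ V^π_{P_s}(s') − V^π_{P_s}(s)]|: J^π_{P_t} ≥ J^π_{P_s} + (1/(1−γ)) · ( E_{s∼d^π_{P_s}, a∼π(·|s), s'∼P_s(·|s,a)}[ (P_t(s'|s,a)/P_s(s'|s,a)) · (r(s,a,s') + γ V^π_{P_s}(s') − V^π_{P_s}(s)) ] − 2ε · D_TV(d^π_{P_s}, d^π_{P_t}) ). -/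
open scoped BigOperators

set_option linter.unusedSectionVars false

section AuxProof

variable {S A : Type*} [Fintype S] [Fintype A] [DecidableEq S]

lemma aux_le_one {X : Type*} [Fintype X] {p : X → ℝ} (hp : IsProb p) (x : X) : p x ≤ 1 := by
  have := Finset.single_le_sum (f := p) (fun i _ => hp.1 i) (Finset.mem_univ x)
  simpa [hp.2] using this

lemma aux_prob_step {P : S → A → S → ℝ} {π : S → A → ℝ} (hπ : IsStochPol π)
    (hP : IsStochKer P) {ρ : S → ℝ} (hρ : IsProb ρ) : IsProb (stepDist P π ρ) := by
  constructor
  · intro s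
    apply Finset.sum_nonneg; intro s' _
    apply Finset.sum_nonneg; intro a _
    exact mul_nonneg (mul_nonneg (hρ.1 s') ((hπ s').1 a)) ((hP s' a).1 s)
  · unfold stepDist
    rw [Finset.sum_comm]
    have h1 : ∀ s' : S, (∑ s : S, ∑ a : A, ρ s' * π s' a * P s' a s) = ρ s' := by
      intro s'
      rw [Finset.sum_comm]
      have h2 : ∀ a : A, (∑ s : S, ρ s' * π s' a * P s' a s) = ρ s' * π s' a := by
        intro a; rw [← Finset.mul_sum, (hP s' a).2, mul_one]
      rw [Finset.sum_congr rfl fun a _ => h2 a, ← Finset.mul_sum, (hπ s').2, mul_one]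
    rw [Finset.sum_congr rfl fun s' _ => h1 s', hρ.2]

lemma aux_prob_state {P : S → A → S → ℝ} {π : S → A → ℝ} (hπ : IsStochPol π)
    (hP : IsStochKer P) {ρ₀ : S → ℝ} (hρ : IsProb ρ₀) (t : ℕ) :
    IsProb (stateDist P π ρ₀ t) := by
  induction t with
  | zero => exact hρ
  | succ t ih => exact aux_prob_step hπ hP ih

lemma aux_wsum_bound {p f : S → ℝ} (hp : IsProb p) :
    |∑ s : S, p s * f s| ≤ ∑ s : S, |f s| := by
  refine (Finset.abs_sum_le_sum_abs _ _).trans (Finset.sum_le_sum ?_)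
  intro s _
  rw [abs_mul, abs_of_nonneg (hp.1 s)]
  exact mul_le_of_le_one_left (abs_nonneg _) (aux_le_one hp s)

lemma aux_summable {γ : ℝ} (hγ0 : 0 ≤ γ) (hγ1 : γ < 1) {c : ℕ → ℝ} {C : ℝ}
    (h : ∀ t, |c t| ≤ C) : Summable (fun t => γ ^ t * c t) := by
  apply Summable.of_norm_bounded
    ((summable_geometric_of_lt_one hγ0 hγ1).mul_right C)
  intro t
  rw [Real.norm_eq_abs, abs_mul, abs_pow, abs_of_nonneg hγ0]
  exact mul_le_mul_of_nonneg_left (h t) (pow_nonneg hγ0 t)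

lemma aux_ret_eq (γ : ℝ) (r P : S → A → S → ℝ) (π : S → A → ℝ) (ρ₀ : S → ℝ) :
    ret γ r P π ρ₀ = ∑' t : ℕ, γ ^ t * ∑ s : S, stateDist P π ρ₀ t s *
      (∑ a : A, ∑ s' : S, π s a * P s a s' * r s a s') := by
  unfold ret
  apply tsum_congr; intro t
  congr 1
  apply Finset.sum_congr rfl; intro s _
  rw [Finset.mul_sum]; apply Finset.sum_congr rfl; intro a _
  rw [Finset.mul_sum]; apply Finset.sum_congr rfl; intro s' _
  ring

lemma aux_stepDist_lin (P : S → A → S → ℝ) (π : S → A → ℝ) (c : S → ℝ)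
    (f : S → S → ℝ) (s : S) :
    stepDist P π (fun x => ∑ s0 : S, c s0 * f s0 x) s
      = ∑ s0 : S, c s0 * stepDist P π (f s0) s := by
  unfold stepDist
  calc (∑ s' : S, ∑ a : A, (∑ s0 : S, c s0 * f s0 s') * π s' a * P s' a s)
      = ∑ s' : S, ∑ a : A, ∑ s0 : S, c s0 * (f s0 s' * π s' a * P s' a s) := by
        apply Finset.sum_congr rfl; intro s' _
        apply Finset.sum_congr rfl; intro a _
        rw [Finset.sum_mul, Finset.sum_mul]
        apply Finset.sum_congr rfl; intro s0 _; ring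
    _ = ∑ s' : S, ∑ s0 : S, ∑ a : A, c s0 * (f s0 s' * π s' a * P s' a s) := by
        apply Finset.sum_congr rfl; intro s' _
        exact Finset.sum_comm
    _ = ∑ s0 : S, ∑ s' : S, ∑ a : A, c s0 * (f s0 s' * π s' a * P s' a s) :=
        Finset.sum_comm
    _ = ∑ s0 : S, c s0 * ∑ s' : S, ∑ a : A, f s0 s' * π s' a * P s' a s := by
        apply Finset.sum_congr rfl; intro s0 _
        rw [Finset.mul_sum]
        apply Finset.sum_congr rfl; intro s' _
        rw [Finset.mul_sum]

lemma aux_stateDist_lin (P : S → A → S → ℝ) (π : S → A → ℝ) (ρ₀ : S → ℝ) (t : ℕ) (s : S) :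
    stateDist P π ρ₀ t s
      = ∑ s0 : S, ρ₀ s0 * stateDist P π (fun x => if x = s0 then 1 else 0) t s := by
  induction t generalizing s with
  | zero =>
    show ρ₀ s = ∑ s0 : S, ρ₀ s0 * (if s = s0 then 1 else 0)
    simp
  | succ t ih =>
    show stepDist P π (stateDist P π ρ₀ t) s = _
    have h : stateDist P π ρ₀ t
        = fun x => ∑ s0 : S, ρ₀ s0 * stateDist P π (fun y => if y = s0 then 1 else 0) t x :=
      funext fun x => ih x
    rw [h, aux_stepDist_lin]
    rfl

lemma aux_indicator_prob (s0 : S) : IsProb (fun x : S => if x = s0 then (1:ℝ) else 0) := by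
  constructor
  · intro x; positivity
  · simp

lemma aux_expRet_eq_ret {γ : ℝ} (hγ0 : 0 ≤ γ) (hγ1 : γ < 1) (r P : S → A → S → ℝ)
    (π : S → A → ℝ) (ρ₀ : S → ℝ) (hπ : IsStochPol π) (hP : IsStochKer P) :
    expRet γ r P π ρ₀ = ret γ r P π ρ₀ := by
  set h : S → ℝ := fun s => ∑ a : A, ∑ s' : S, π s a * P s a s' * r s a s' with hh
  set f : S → S → ℝ := fun s0 x => if x = s0 then 1 else 0 with hf
  have hsum : ∀ s0 : S, Summable (fun t : ℕ =>
      γ ^ t * (ρ₀ s0 * ∑ s : S, stateDist P π (f s0) t s * h s)) := by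
    intro s0
    apply aux_summable hγ0 hγ1 (C := |ρ₀ s0| * ∑ s : S, |h s|)
    intro t
    rw [abs_mul]
    exact mul_le_mul_of_nonneg_left
      (aux_wsum_bound (aux_prob_state hπ hP (aux_indicator_prob s0) t)) (abs_nonneg _)
  calc expRet γ r P π ρ₀
      = ∑ s0 : S, ρ₀ s0 * ∑' t : ℕ, γ ^ t * ∑ s : S, stateDist P π (f s0) t s * h s := by
        unfold expRet valueFn
        apply Finset.sum_congr rfl; intro s0 _
        rw [aux_ret_eq]
    _ = ∑ s0 : S, ∑' t : ℕ, γ ^ t * (ρ₀ s0 * ∑ s : S, stateDist P π (f s0) t s * h s) := by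
        apply Finset.sum_congr rfl; intro s0 _
        rw [← tsum_mul_left]
        apply tsum_congr; intro t; ring
    _ = ∑' t : ℕ, ∑ s0 : S, γ ^ t * (ρ₀ s0 * ∑ s : S, stateDist P π (f s0) t s * h s) := by
        exact (Summable.tsum_finsetSum fun s0 _ => hsum s0).symm
    _ = ∑' t : ℕ, γ ^ t * ∑ s : S, stateDist P π ρ₀ t s * h s := by
        apply tsum_congr; intro t
        rw [← Finset.mul_sum]
        congr 1
        calc ∑ s0 : S, ρ₀ s0 * ∑ s : S, stateDist P π (f s0) t s * h s
            = ∑ s0 : S, ∑ s : S, ρ₀ s0 * stateDist P π (f s0) t s * h s := by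
              apply Finset.sum_congr rfl; intro s0 _
              rw [Finset.mul_sum]
              apply Finset.sum_congr rfl; intro s _; ring
          _ = ∑ s : S, ∑ s0 : S, ρ₀ s0 * stateDist P π (f s0) t s * h s := Finset.sum_comm
          _ = ∑ s : S, stateDist P π ρ₀ t s * h s := by
              apply Finset.sum_congr rfl; intro s _
              rw [← Finset.sum_mul, ← aux_stateDist_lin]
    _ = ret γ r P π ρ₀ := (aux_ret_eq γ r P π ρ₀).symm

end AuxProof


section AuxProof2

variable {S A : Type*} [Fintype S] [Fintype A] [DecidableEq S]

set_option linter.unusedSectionVars false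

/-- The expected Bellman-residual function `g`. -/
noncomputable def auxG (γ : ℝ) (r Ps Pt : S → A → S → ℝ) (π : S → A → ℝ) : S → ℝ :=
  fun s => ∑ a : A, ∑ s' : S, π s a * Pt s a s' *
    (r s a s' + γ * valueFn γ r Ps π s' - valueFn γ r Ps π s)

/-- Difference of discounted occupancy series. -/
noncomputable def auxD (γ : ℝ) (Ps Pt : S → A → S → ℝ) (π : S → A → ℝ) (ρ₀ : S → ℝ) :
    S → ℝ :=
  fun s => ∑' t : ℕ, γ ^ t * (stateDist Ps π ρ₀ t s - stateDist Pt π ρ₀ t s)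

set_option maxHeartbeats 1000000 in
lemma aux_pdl {γ : ℝ} (hγ0 : 0 ≤ γ) (hγ1 : γ < 1) (r Ps Pt : S → A → S → ℝ)
    (π : S → A → ℝ) (ρ₀ : S → ℝ) (hπ : IsStochPol π) (hPs : IsStochKer Ps)
    (hPt : IsStochKer Pt) (hρ : IsProb ρ₀) :
    ret γ r Pt π ρ₀ = expRet γ r Ps π ρ₀ +
      ∑' t : ℕ, γ ^ t * ∑ s : S, stateDist Pt π ρ₀ t s * auxG γ r Ps Pt π s := by
  have hρtp : ∀ t, IsProb (stateDist Pt π ρ₀ t) := fun t => aux_prob_state hπ hPt hρ t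
  have claim : ∀ t : ℕ,
      (∑ s : S, stateDist Pt π ρ₀ t s * auxG γ r Ps Pt π s)
        = (∑ s : S, stateDist Pt π ρ₀ t s *
            (∑ a : A, ∑ s' : S, π s a * Pt s a s' * r s a s'))
          + γ * (∑ s : S, stateDist Pt π ρ₀ (t + 1) s * valueFn γ r Ps π s)
          - ∑ s : S, stateDist Pt π ρ₀ t s * valueFn γ r Ps π s := by
    intro t
    have expand : ∀ s : S, stateDist Pt π ρ₀ t s * auxG γ r Ps Pt π s
        = stateDist Pt π ρ₀ t s * (∑ a : A, ∑ s' : S, π s a * Pt s a s' * r s a s')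
          + γ * (∑ a : A, ∑ s' : S,
              stateDist Pt π ρ₀ t s * π s a * Pt s a s' * valueFn γ r Ps π s')
          - stateDist Pt π ρ₀ t s * valueFn γ r Ps π s := by
      intro s
      have e1 : stateDist Pt π ρ₀ t s * auxG γ r Ps Pt π s
          = ∑ a : A, ∑ s' : S,
              (stateDist Pt π ρ₀ t s * (π s a * Pt s a s' * r s a s')
                + γ * (stateDist Pt π ρ₀ t s * π s a * Pt s a s' * valueFn γ r Ps π s')
                - stateDist Pt π ρ₀ t s * π s a * Pt s a s' * valueFn γ r Ps π s) := by
        unfold auxG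
        rw [Finset.mul_sum]
        apply Finset.sum_congr rfl; intro a _
        rw [Finset.mul_sum]
        apply Finset.sum_congr rfl; intro s' _
        ring
      rw [e1]
      simp only [Finset.sum_add_distrib, Finset.sum_sub_distrib]
      congr 1
      · congr 1
        · rw [Finset.mul_sum]
          apply Finset.sum_congr rfl; intro a _
          rw [Finset.mul_sum]
        · rw [Finset.mul_sum]
          apply Finset.sum_congr rfl; intro a _
          rw [Finset.mul_sum]
      · -- ∑ a ∑ s', ρ π Pt V s = ρ V s
        calc (∑ a : A, ∑ s' : S,
                stateDist Pt π ρ₀ t s * π s a * Pt s a s' * valueFn γ r Ps π s)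
            = ∑ a : A, stateDist Pt π ρ₀ t s * π s a * valueFn γ r Ps π s *
                ∑ s' : S, Pt s a s' := by
              apply Finset.sum_congr rfl; intro a _
              rw [Finset.mul_sum]
              apply Finset.sum_congr rfl; intro s' _
              ring
          _ = ∑ a : A, stateDist Pt π ρ₀ t s * π s a * valueFn γ r Ps π s := by
              apply Finset.sum_congr rfl; intro a _
              rw [(hPt s a).2, mul_one]
          _ = stateDist Pt π ρ₀ t s * valueFn γ r Ps π s * ∑ a : A, π s a := by
              rw [Finset.mul_sum]
              apply Finset.sum_congr rfl; intro a _
              ring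
          _ = stateDist Pt π ρ₀ t s * valueFn γ r Ps π s := by
              rw [(hπ s).2, mul_one]
    rw [Finset.sum_congr rfl fun s _ => expand s]
    simp only [Finset.sum_add_distrib, Finset.sum_sub_distrib]
    congr 2
    · -- γ * middle
      rw [← Finset.mul_sum]
      congr 1
      -- ∑ s ∑ a ∑ s', ρ π Pt V s' = ∑ s', ρ_{t+1} s' V s'
      have hstep : ∀ s' : S, stateDist Pt π ρ₀ (t + 1) s'
          = ∑ x : S, ∑ a : A, stateDist Pt π ρ₀ t x * π x a * Pt x a s' := fun s' => rfl
      calc (∑ s : S, ∑ a : A, ∑ s' : S,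
              stateDist Pt π ρ₀ t s * π s a * Pt s a s' * valueFn γ r Ps π s')
          = ∑ s : S, ∑ s' : S, ∑ a : A,
              stateDist Pt π ρ₀ t s * π s a * Pt s a s' * valueFn γ r Ps π s' := by
            apply Finset.sum_congr rfl; intro s _
            exact Finset.sum_comm
        _ = ∑ s' : S, ∑ s : S, ∑ a : A,
              stateDist Pt π ρ₀ t s * π s a * Pt s a s' * valueFn γ r Ps π s' :=
            Finset.sum_comm
        _ = ∑ s' : S, (∑ x : S, ∑ a : A,
              stateDist Pt π ρ₀ t x * π x a * Pt x a s') * valueFn γ r Ps π s' := by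
            apply Finset.sum_congr rfl; intro s' _
            rw [Finset.sum_mul]
            apply Finset.sum_congr rfl; intro x _
            rw [Finset.sum_mul]
        _ = ∑ s' : S, stateDist Pt π ρ₀ (t + 1) s' * valueFn γ r Ps π s' := by
            apply Finset.sum_congr rfl; intro s' _
            rw [hstep s']
  -- summability
  have hVb : ∀ t, |∑ s : S, stateDist Pt π ρ₀ t s * valueFn γ r Ps π s|
      ≤ ∑ s : S, |valueFn γ r Ps π s| := fun t => aux_wsum_bound (hρtp t)
  have hb : Summable (fun t : ℕ =>
      γ ^ t * ∑ s : S, stateDist Pt π ρ₀ t s * valueFn γ r Ps π s) :=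
    aux_summable hγ0 hγ1 hVb
  have hb1 : Summable (fun t : ℕ =>
      γ ^ (t + 1) * ∑ s : S, stateDist Pt π ρ₀ (t + 1) s * valueFn γ r Ps π s) :=
    (summable_nat_add_iff 1).2 hb
  have hcs : Summable (fun t : ℕ => γ ^ t * ∑ s : S, stateDist Pt π ρ₀ t s *
      (∑ a : A, ∑ s' : S, π s a * Pt s a s' * r s a s')) :=
    aux_summable hγ0 hγ1 (fun t => aux_wsum_bound (hρtp t))
  -- assemble
  have key : (∑' t : ℕ, γ ^ t * ∑ s : S, stateDist Pt π ρ₀ t s * auxG γ r Ps Pt π s)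
      = ret γ r Pt π ρ₀ - ∑ s : S, ρ₀ s * valueFn γ r Ps π s := by
    calc (∑' t : ℕ, γ ^ t * ∑ s : S, stateDist Pt π ρ₀ t s * auxG γ r Ps Pt π s)
        = ∑' t : ℕ, ((γ ^ t * ∑ s : S, stateDist Pt π ρ₀ t s *
              (∑ a : A, ∑ s' : S, π s a * Pt s a s' * r s a s'))
            + ((γ ^ (t + 1) * ∑ s : S, stateDist Pt π ρ₀ (t + 1) s * valueFn γ r Ps π s)
              - γ ^ t * ∑ s : S, stateDist Pt π ρ₀ t s * valueFn γ r Ps π s)) := by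
          apply tsum_congr; intro t
          rw [claim t]
          rw [pow_succ]
          ring
      _ = (∑' t : ℕ, γ ^ t * ∑ s : S, stateDist Pt π ρ₀ t s *
              (∑ a : A, ∑ s' : S, π s a * Pt s a s' * r s a s'))
          + ((∑' t : ℕ, γ ^ (t + 1) * ∑ s : S, stateDist Pt π ρ₀ (t + 1) s *
                valueFn γ r Ps π s)
            - ∑' t : ℕ, γ ^ t * ∑ s : S, stateDist Pt π ρ₀ t s * valueFn γ r Ps π s) := by
          rw [Summable.tsum_add hcs (hb1.sub hb), Summable.tsum_sub hb1 hb]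
      _ = ret γ r Pt π ρ₀ - ∑ s : S, ρ₀ s * valueFn γ r Ps π s := by
          rw [← aux_ret_eq]
          have h0 : (∑' t : ℕ, γ ^ t * ∑ s : S, stateDist Pt π ρ₀ t s * valueFn γ r Ps π s)
              = (γ ^ 0 * ∑ s : S, stateDist Pt π ρ₀ 0 s * valueFn γ r Ps π s)
                + ∑' t : ℕ, γ ^ (t + 1) * ∑ s : S, stateDist Pt π ρ₀ (t + 1) s *
                    valueFn γ r Ps π s := Summable.tsum_eq_zero_add hb
          have h00 : (γ ^ 0 * ∑ s : S, stateDist Pt π ρ₀ 0 s * valueFn γ r Ps π s)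
              = ∑ s : S, ρ₀ s * valueFn γ r Ps π s := by
            rw [pow_zero, one_mul]
            rfl
          rw [h0, h00]
          ring
  rw [key]
  unfold expRet
  ring

lemma aux_visit_sum {γ : ℝ} (hγ0 : 0 ≤ γ) (hγ1 : γ < 1) (P : S → A → S → ℝ)
    (π : S → A → ℝ) (ρ₀ : S → ℝ) (hπ : IsStochPol π) (hP : IsStochKer P)
    (hρ : IsProb ρ₀) (g : S → ℝ) :
    ∑ s : S, visitS γ P π ρ₀ s * g s
      = (1 - γ) * ∑' t : ℕ, γ ^ t * ∑ s : S, stateDist P π ρ₀ t s * g s := by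
  have hsum : ∀ s : S, Summable (fun t : ℕ => γ ^ t * (stateDist P π ρ₀ t s * g s)) := by
    intro s
    apply aux_summable hγ0 hγ1 (C := |g s|)
    intro t
    rw [abs_mul]
    have h1 : |stateDist P π ρ₀ t s| ≤ 1 := by
      rw [abs_of_nonneg ((aux_prob_state hπ hP hρ t).1 s)]
      exact aux_le_one (aux_prob_state hπ hP hρ t) s
    exact mul_le_of_le_one_left (abs_nonneg _) h1
  calc ∑ s : S, visitS γ P π ρ₀ s * g s
      = ∑ s : S, (1 - γ) * ∑' t : ℕ, γ ^ t * (stateDist P π ρ₀ t s * g s) := by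
        apply Finset.sum_congr rfl; intro s _
        unfold visitS
        rw [mul_assoc, ← tsum_mul_right]
        congr 1
        apply tsum_congr; intro t
        ring
    _ = (1 - γ) * ∑ s : S, ∑' t : ℕ, γ ^ t * (stateDist P π ρ₀ t s * g s) := by
        rw [Finset.mul_sum]
    _ = (1 - γ) * ∑' t : ℕ, ∑ s : S, γ ^ t * (stateDist P π ρ₀ t s * g s) := by
        rw [Summable.tsum_finsetSum fun s _ => hsum s]
    _ = (1 - γ) * ∑' t : ℕ, γ ^ t * ∑ s : S, stateDist P π ρ₀ t s * g s := by
        congr 1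
        apply tsum_congr; intro t
        rw [Finset.mul_sum]

lemma aux_final {E TX TY SD ε γ : ℝ} (h1γ : 0 < 1 - γ) (hkey : TX - TY ≤ ε * SD) :
    E + TY ≥ E + 1 / (1 - γ) * ((1 - γ) * TX - 2 * ε * (1 / 2 * ((1 - γ) * SD))) := by
  have h2 : 1 / (1 - γ) * ((1 - γ) * TX - 2 * ε * (1 / 2 * ((1 - γ) * SD)))
      = TX - ε * SD := by
    field_simp
  rw [h2]
  linarith

end AuxProof2

theorem stmt10 {S A : Type*} [Fintype S] [Fintype A] [DecidableEq S] [Nonempty S]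
    (γ : ℝ) (hγ0 : 0 ≤ γ) (hγ1 : γ < 1)
    (r Ps Pt : S → A → S → ℝ) (π : S → A → ℝ) (ρ₀ : S → ℝ)
    (hπ : IsStochPol π) (hPs : IsStochKer Ps) (hPt : IsStochKer Pt) (hρ : IsProb ρ₀)
    (habs : ∀ s a s', 0 < Pt s a s' → 0 < Ps s a s')
    (ε : ℝ)
    (hε : ε = ⨆ s : S, |∑ a : A, ∑ s' : S, π s a * Pt s a s' *
        (r s a s' + γ * valueFn γ r Ps π s' - valueFn γ r Ps π s)|) :
    expRet γ r Pt π ρ₀ ≥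
      expRet γ r Ps π ρ₀ +
        (1 / (1 - γ)) *
          ((∑ s : S, ∑ a : A, ∑ s' : S,
              visitS γ Ps π ρ₀ s * π s a * Ps s a s' *
                ((Pt s a s' / Ps s a s') *
                  (r s a s' + γ * valueFn γ r Ps π s' - valueFn γ r Ps π s))) -
            2 * ε * tvDist (visitS γ Ps π ρ₀) (visitS γ Pt π ρ₀)) := by
  have h1γ : (0:ℝ) < 1 - γ := by linarith
  have hεg : ∀ s : S, |auxG γ r Ps Pt π s| ≤ ε := by
    intro s
    rw [hε]
    have hb : BddAbove (Set.range (fun s : S => |∑ a : A, ∑ s' : S, π s a * Pt s a s' *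
        (r s a s' + γ * valueFn γ r Ps π s' - valueFn γ r Ps π s)|)) :=
      Set.Finite.bddAbove (Set.finite_range _)
    exact le_ciSup hb s
  have hρsp : ∀ t, IsProb (stateDist Ps π ρ₀ t) := fun t => aux_prob_state hπ hPs hρ t
  have hρtp : ∀ t, IsProb (stateDist Pt π ρ₀ t) := fun t => aux_prob_state hπ hPt hρ t
  have habs1 : ∀ t (s : S), |stateDist Ps π ρ₀ t s| ≤ 1 := by
    intro t s
    rw [abs_of_nonneg ((hρsp t).1 s)]
    exact aux_le_one (hρsp t) s
  have habs2 : ∀ t (s : S), |stateDist Pt π ρ₀ t s| ≤ 1 := by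
    intro t s
    rw [abs_of_nonneg ((hρtp t).1 s)]
    exact aux_le_one (hρtp t) s
  -- summability facts
  have hXs : Summable (fun t : ℕ =>
      γ ^ t * ∑ s : S, stateDist Ps π ρ₀ t s * auxG γ r Ps Pt π s) :=
    aux_summable hγ0 hγ1 (fun t => aux_wsum_bound (hρsp t))
  have hYs : Summable (fun t : ℕ =>
      γ ^ t * ∑ s : S, stateDist Pt π ρ₀ t s * auxG γ r Ps Pt π s) :=
    aux_summable hγ0 hγ1 (fun t => aux_wsum_bound (hρtp t))
  have hAs : ∀ s : S, Summable (fun t : ℕ => γ ^ t * stateDist Ps π ρ₀ t s) :=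
    fun s => aux_summable hγ0 hγ1 (C := 1) (fun t => habs1 t s)
  have hBs : ∀ s : S, Summable (fun t : ℕ => γ ^ t * stateDist Pt π ρ₀ t s) :=
    fun s => aux_summable hγ0 hγ1 (C := 1) (fun t => habs2 t s)
  have hDb : ∀ t (s : S), |stateDist Ps π ρ₀ t s - stateDist Pt π ρ₀ t s| ≤ 2 := by
    intro t s
    have h1 := habs1 t s
    have h2 := habs2 t s
    calc |stateDist Ps π ρ₀ t s - stateDist Pt π ρ₀ t s|
        ≤ |stateDist Ps π ρ₀ t s| + |stateDist Pt π ρ₀ t s| := abs_sub _ _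
      _ ≤ 2 := by linarith
  have hDgs : ∀ s : S, Summable (fun t : ℕ =>
      γ ^ t * ((stateDist Ps π ρ₀ t s - stateDist Pt π ρ₀ t s) * auxG γ r Ps Pt π s)) := by
    intro s
    apply aux_summable hγ0 hγ1 (C := 2 * |auxG γ r Ps Pt π s|)
    intro t
    rw [abs_mul]
    exact mul_le_mul_of_nonneg_right (hDb t s) (abs_nonneg _)
  -- performance difference identity
  have hL : expRet γ r Pt π ρ₀ = expRet γ r Ps π ρ₀ +
      ∑' t : ℕ, γ ^ t * ∑ s : S, stateDist Pt π ρ₀ t s * auxG γ r Ps Pt π s := by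
    rw [aux_expRet_eq_ret hγ0 hγ1 r Pt π ρ₀ hπ hPt]
    exact aux_pdl hγ0 hγ1 r Ps Pt π ρ₀ hπ hPs hPt hρ
  -- simplify the importance-weighted triple sum
  have hsum1 : (∑ s : S, ∑ a : A, ∑ s' : S,
        visitS γ Ps π ρ₀ s * π s a * Ps s a s' *
          ((Pt s a s' / Ps s a s') *
            (r s a s' + γ * valueFn γ r Ps π s' - valueFn γ r Ps π s)))
      = ∑ s : S, visitS γ Ps π ρ₀ s * auxG γ r Ps Pt π s := by
    apply Finset.sum_congr rfl; intro s _
    unfold auxG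
    rw [Finset.mul_sum]
    apply Finset.sum_congr rfl; intro a _
    rw [Finset.mul_sum]
    apply Finset.sum_congr rfl; intro s' _
    by_cases hz : Ps s a s' = 0
    · have hPt0 : Pt s a s' = 0 := by
        by_contra hne
        have hpos : 0 < Pt s a s' := lt_of_le_of_ne ((hPt s a).1 s') (Ne.symm hne)
        have := habs s a s' hpos
        rw [hz] at this
        exact lt_irrefl 0 this
      rw [hz, hPt0]
      ring
    · field_simp
  have hVg := aux_visit_sum hγ0 hγ1 Ps π ρ₀ hπ hPs hρ (auxG γ r Ps Pt π)
  -- visitation difference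
  have hvd : ∀ s : S, visitS γ Ps π ρ₀ s - visitS γ Pt π ρ₀ s
      = (1 - γ) * auxD γ Ps Pt π ρ₀ s := by
    intro s
    show (1 - γ) * (∑' t : ℕ, γ ^ t * stateDist Ps π ρ₀ t s)
        - (1 - γ) * (∑' t : ℕ, γ ^ t * stateDist Pt π ρ₀ t s) = _
    rw [← mul_sub]
    congr 1
    unfold auxD
    have he : (∑' t : ℕ, γ ^ t * (stateDist Ps π ρ₀ t s - stateDist Pt π ρ₀ t s))
        = ∑' t : ℕ, (γ ^ t * stateDist Ps π ρ₀ t s - γ ^ t * stateDist Pt π ρ₀ t s) :=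
      tsum_congr fun t => by ring
    rw [he, Summable.tsum_sub (hAs s) (hBs s)]
  have hTV : tvDist (visitS γ Ps π ρ₀) (visitS γ Pt π ρ₀)
      = 1 / 2 * ((1 - γ) * ∑ s : S, |auxD γ Ps Pt π ρ₀ s|) := by
    unfold tvDist
    have he : ∀ s : S, |visitS γ Ps π ρ₀ s - visitS γ Pt π ρ₀ s|
        = (1 - γ) * |auxD γ Ps Pt π ρ₀ s| := by
      intro s
      rw [hvd s, abs_mul, abs_of_pos h1γ]
    rw [Finset.sum_congr rfl fun s _ => he s, ← Finset.mul_sum]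
  -- key difference bound
  have hTdiff : (∑' t : ℕ, γ ^ t * ∑ s : S, stateDist Ps π ρ₀ t s * auxG γ r Ps Pt π s)
      - (∑' t : ℕ, γ ^ t * ∑ s : S, stateDist Pt π ρ₀ t s * auxG γ r Ps Pt π s)
      = ∑ s : S, auxD γ Ps Pt π ρ₀ s * auxG γ r Ps Pt π s := by
    calc (∑' t : ℕ, γ ^ t * ∑ s : S, stateDist Ps π ρ₀ t s * auxG γ r Ps Pt π s)
        - (∑' t : ℕ, γ ^ t * ∑ s : S, stateDist Pt π ρ₀ t s * auxG γ r Ps Pt π s)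
        = ∑' t : ℕ, ((γ ^ t * ∑ s : S, stateDist Ps π ρ₀ t s * auxG γ r Ps Pt π s)
            - γ ^ t * ∑ s : S, stateDist Pt π ρ₀ t s * auxG γ r Ps Pt π s) :=
          (Summable.tsum_sub hXs hYs).symm
      _ = ∑' t : ℕ, ∑ s : S,
            γ ^ t * ((stateDist Ps π ρ₀ t s - stateDist Pt π ρ₀ t s) * auxG γ r Ps Pt π s) := by
          apply tsum_congr; intro t
          rw [Finset.mul_sum, Finset.mul_sum, ← Finset.sum_sub_distrib]
          apply Finset.sum_congr rfl; intro s _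
          ring
      _ = ∑ s : S, ∑' t : ℕ,
            γ ^ t * ((stateDist Ps π ρ₀ t s - stateDist Pt π ρ₀ t s) * auxG γ r Ps Pt π s) :=
          Summable.tsum_finsetSum fun s _ => hDgs s
      _ = ∑ s : S, auxD γ Ps Pt π ρ₀ s * auxG γ r Ps Pt π s := by
          apply Finset.sum_congr rfl; intro s _
          unfold auxD
          rw [← tsum_mul_right]
          apply tsum_congr; intro t
          ring
  have hkey : (∑' t : ℕ, γ ^ t * ∑ s : S, stateDist Ps π ρ₀ t s * auxG γ r Ps Pt π s)
      - (∑' t : ℕ, γ ^ t * ∑ s : S, stateDist Pt π ρ₀ t s * auxG γ r Ps Pt π s)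
      ≤ ε * ∑ s : S, |auxD γ Ps Pt π ρ₀ s| := by
    rw [hTdiff, Finset.mul_sum]
    apply Finset.sum_le_sum
    intro s _
    calc auxD γ Ps Pt π ρ₀ s * auxG γ r Ps Pt π s
        ≤ |auxD γ Ps Pt π ρ₀ s * auxG γ r Ps Pt π s| := le_abs_self _
      _ = |auxD γ Ps Pt π ρ₀ s| * |auxG γ r Ps Pt π s| := abs_mul _ _
      _ ≤ |auxD γ Ps Pt π ρ₀ s| * ε := mul_le_mul_of_nonneg_left (hεg s) (abs_nonneg _)
      _ = ε * |auxD γ Ps Pt π ρ₀ s| := mul_comm _ _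
  rw [hL, hsum1, hVg, hTV]
  exact aux_final h1γ hkey
end
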